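/- Let u : B_R → ℝ be radial (i.e. u(x) depends only on |x|), let r ∈ (0,R), and assume φ ∈ C² touches u from below at re₁ ≠ 0, where e₁ is the first standard basis vector. Then for every index i with 1 < i ≤ N one has D_iφ(re₁) = 0 and D_{ii}φ(re₁) ≤ (1/r) D_1φ(re₁). -/

import Mathlib

open MeasureTheory Filter Set Asymptotics
open scoped Topology NNReal

noncomputable section

/-- The `i`-th partial derivative `D_i φ(y)`. -/
def pd (n : ℕ) (φ : EuclideanSpace ℝ (Fin n) → ℝ) (i : Fin n)
    (y : EuclideanSpace ℝ (Fin n)) : ℝ :=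
  fderiv ℝ φ y (EuclideanSpace.single i 1)

/-- The second partial derivative `D_{ij} φ(y)`. -/
def pd2 (n : ℕ) (φ : EuclideanSpace ℝ (Fin n) → ℝ) (i j : Fin n)
    (y : EuclideanSpace ℝ (Fin n)) : ℝ :=
  fderiv ℝ (fun z => fderiv ℝ φ z (EuclideanSpace.single j 1)) y (EuclideanSpace.single i 1)

/-- The normalized `p`-Laplacian
`Δ_p^N φ(y) = Δφ(y) + (p-2)|Dφ(y)|⁻² Σ_{i,j} D_{ij}φ(y) D_iφ(y) D_jφ(y)`. -/
def normPLap (n : ℕ) (p : ℝ) (φ : EuclideanSpace ℝ (Fin n) → ℝ)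
    (y : EuclideanSpace ℝ (Fin n)) : ℝ :=
  (∑ i, pd2 n φ i i y) +
    (p - 2) / ‖gradient φ y‖ ^ 2 *
      ∑ i, ∑ j, pd2 n φ i j y * pd n φ i y * pd n φ j y

/-- `φ` touches `u` from below at `x₀` (within the set `s`). -/
def TouchesBelowOn (n : ℕ) (φ u : EuclideanSpace ℝ (Fin n) → ℝ)
    (s : Set (EuclideanSpace ℝ (Fin n))) (x₀ : EuclideanSpace ℝ (Fin n)) : Prop :=
  φ x₀ = u x₀ ∧ ∀ x ∈ s, x ≠ x₀ → φ x < u x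

/-- `φ` touches `u` from above at `x₀` (within the set `s`). -/
def TouchesAboveOn (n : ℕ) (φ u : EuclideanSpace ℝ (Fin n) → ℝ)
    (s : Set (EuclideanSpace ℝ (Fin n))) (x₀ : EuclideanSpace ℝ (Fin n)) : Prop :=
  φ x₀ = u x₀ ∧ ∀ x ∈ s, x ≠ x₀ → u x < φ x

/-- `u` is a (bounded, lower semicontinuous) viscosity supersolution to
`-|Du|^{q-2} Δ_p^N u = f(|x|)` in `B_R ⊆ ℝ^n`. -/
def IsViscSupersol (n : ℕ) (p q R : ℝ) (f : ℝ → ℝ)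
    (u : EuclideanSpace ℝ (Fin n) → ℝ) : Prop :=
  (∃ M, ∀ x ∈ Metric.ball (0 : EuclideanSpace ℝ (Fin n)) R, |u x| ≤ M) ∧
    LowerSemicontinuousOn u (Metric.ball 0 R) ∧
    ∀ φ : EuclideanSpace ℝ (Fin n) → ℝ, ContDiff ℝ 2 φ →
      ∀ x₀ ∈ Metric.ball (0 : EuclideanSpace ℝ (Fin n)) R,
        TouchesBelowOn n φ u (Metric.ball 0 R) x₀ →
        (∀ x ∈ Metric.ball (0 : EuclideanSpace ℝ (Fin n)) R, x ≠ x₀ → gradient φ x ≠ 0) →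
        0 ≤ Filter.limsup
              (fun y => -(‖gradient φ y‖ ^ (q - 2) * normPLap n p φ y)) (𝓝[≠] x₀)
            - f ‖x₀‖

/-- `u` is a (bounded, upper semicontinuous) viscosity subsolution to
`-|Du|^{q-2} Δ_p^N u = f(|x|)` in `B_R ⊆ ℝ^n`. -/
def IsViscSubsol (n : ℕ) (p q R : ℝ) (f : ℝ → ℝ)
    (u : EuclideanSpace ℝ (Fin n) → ℝ) : Prop :=
  (∃ M, ∀ x ∈ Metric.ball (0 : EuclideanSpace ℝ (Fin n)) R, |u x| ≤ M) ∧
    UpperSemicontinuousOn u (Metric.ball 0 R) ∧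
    ∀ φ : EuclideanSpace ℝ (Fin n) → ℝ, ContDiff ℝ 2 φ →
      ∀ x₀ ∈ Metric.ball (0 : EuclideanSpace ℝ (Fin n)) R,
        TouchesAboveOn n φ u (Metric.ball 0 R) x₀ →
        (∀ x ∈ Metric.ball (0 : EuclideanSpace ℝ (Fin n)) R, x ≠ x₀ → gradient φ x ≠ 0) →
        Filter.liminf
            (fun y => -(‖gradient φ y‖ ^ (q - 2) * normPLap n p φ y)) (𝓝[≠] x₀)
          - f ‖x₀‖ ≤ 0

lemma second_deriv_test_max {g g₁ : ℝ → ℝ} {m ε : ℝ} (hε : 0 < ε)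
    (hg : ∀ t ∈ Set.Ioo (-ε) ε, HasDerivAt g (g₁ t) t)
    (hmax : IsLocalMax g 0) (hg₁0 : g₁ 0 = 0)
    (hm : HasDerivAt g₁ m 0) : m ≤ 0 := by
  by_contra hm'
  push_neg at hm'
  have hslope := hasDerivAt_iff_tendsto_slope.1 hm
  have hpos : ∀ᶠ t in 𝓝[>] (0:ℝ), 0 < g₁ t := by
    have h1 : ∀ᶠ t in 𝓝[≠] (0:ℝ), 0 < slope g₁ 0 t :=
      hslope.eventually (eventually_gt_nhds hm')
    have h2 : ∀ᶠ t in 𝓝[>] (0:ℝ), 0 < slope g₁ 0 t :=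
      h1.filter_mono (nhdsWithin_mono _ (fun t ht => ne_of_gt ht))
    filter_upwards [h2, self_mem_nhdsWithin] with t ht ht0
    have hs : slope g₁ 0 t = g₁ t / t := by
      simp [slope, hg₁0, div_eq_inv_mul]
    rw [hs] at ht
    have := mul_pos ht ht0
    rwa [div_mul_cancel₀ _ (ne_of_gt ht0)] at this
  have hmax' : ∀ᶠ t in 𝓝 (0:ℝ), g t ≤ g 0 := hmax
  rw [eventually_nhdsWithin_iff] at hpos
  obtain ⟨δ₁, hδ₁, h₁⟩ := Metric.eventually_nhds_iff.1 hpos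
  obtain ⟨δ₂, hδ₂, h₂⟩ := Metric.eventually_nhds_iff.1 hmax'
  set X := min (min δ₁ δ₂) ε with hXdef
  have hXpos : 0 < X := by positivity
  set δ := X / 2 with hδdef
  have hδpos : 0 < δ := by positivity
  have hX1 : X ≤ δ₁ := le_trans (min_le_left _ _) (min_le_left _ _)
  have hX2 : X ≤ δ₂ := le_trans (min_le_left _ _) (min_le_right _ _)
  have hX3 : X ≤ ε := min_le_right _ _
  have hδ₁' : δ < δ₁ := by simp only [hδdef]; linarith
  have hδ₂' : δ < δ₂ := by simp only [hδdef]; linarith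
  have hδε : δ < ε := by simp only [hδdef]; linarith
  have hmono : StrictMonoOn g (Set.Icc 0 δ) := by
    apply strictMonoOn_of_deriv_pos (convex_Icc _ _)
    · intro t ht
      exact (hg t ⟨by linarith [ht.1], by linarith [ht.2]⟩).continuousAt.continuousWithinAt
    · intro t ht
      rw [interior_Icc] at ht
      rw [(hg t ⟨by linarith [ht.1], by linarith [ht.2]⟩).deriv]
      apply h₁
      · rw [Real.dist_eq, sub_zero, abs_of_pos ht.1]; linarith [ht.2]
      · exact ht.1
  have hlt : g 0 < g δ := hmono ⟨le_refl _, le_of_lt hδpos⟩ ⟨le_of_lt hδpos, le_refl _⟩ hδpos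
  have hle : g δ ≤ g 0 := h₂ (by rw [Real.dist_eq, sub_zero, abs_of_pos hδpos]; exact hδ₂')
  linarith

/-- Lemma 3.5: if the radial function `u` is touched from below at
`r e₁ ≠ 0` by a `C²` function `φ`, then `D_i φ(r e₁) = 0` and
`D_{ii} φ(r e₁) ≤ (1/r) D_1 φ(r e₁)` for all `1 < i ≤ N`. -/
theorem jets_of_radial_function
    (N : ℕ) (hN : 2 ≤ N) (R : ℝ) (hR : 0 < R)
    (u φ : EuclideanSpace ℝ (Fin N) → ℝ)
    (hrad : ∀ x y : EuclideanSpace ℝ (Fin N), ‖x‖ = ‖y‖ → u x = u y)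
    (r : ℝ) (hr : r ∈ Set.Ioo 0 R)
    (hφ : ContDiff ℝ 2 φ)
    (htouch : TouchesBelowOn N φ u (Metric.ball 0 R)
      (r • EuclideanSpace.single (⟨0, by omega⟩ : Fin N) 1)) :
    ∀ i : Fin N, i ≠ (⟨0, by omega⟩ : Fin N) →
      pd N φ i (r • EuclideanSpace.single (⟨0, by omega⟩ : Fin N) 1) = 0 ∧
      pd2 N φ i i (r • EuclideanSpace.single (⟨0, by omega⟩ : Fin N) 1) ≤
        (1 / r) * pd N φ (⟨0, by omega⟩ : Fin N)
          (r • EuclideanSpace.single (⟨0, by omega⟩ : Fin N) 1) := by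
  intro i hi
  obtain ⟨hr0, hrR⟩ := hr
  set i0 : Fin N := ⟨0, by omega⟩ with hi0
  set e₁ : EuclideanSpace ℝ (Fin N) := EuclideanSpace.single i0 1 with he₁
  set ei : EuclideanSpace ℝ (Fin N) := EuclideanSpace.single i 1 with hei
  set x₀ : EuclideanSpace ℝ (Fin N) := r • e₁ with hx₀def
  -- basic facts
  have hne₁ : ‖e₁‖ = 1 := by simp [he₁]
  have hnei : ‖ei‖ = 1 := by simp [hei]
  have hinner : (inner ℝ e₁ ei : ℝ) = 0 := by
    rw [he₁, hei, EuclideanSpace.inner_single_left]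
    simp [EuclideanSpace.single_apply, hi.symm]
  have hx₀norm : ‖x₀‖ = r := by
    rw [hx₀def, norm_smul, hne₁, mul_one, Real.norm_eq_abs, abs_of_pos hr0]
  -- the curve
  set f : ℝ → ℝ := fun t => Real.sqrt (r^2 - t^2) with hf
  set c : ℝ → EuclideanSpace ℝ (Fin N) := fun t => f t • e₁ + t • ei with hc
  set p : ℝ → ℝ := fun t => -t / Real.sqrt (r^2 - t^2) with hp
  set v : ℝ → EuclideanSpace ℝ (Fin N) := fun t => p t • e₁ + ei with hv
  set g : ℝ → ℝ := fun t => φ (c t) with hg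
  set g₁ : ℝ → ℝ := fun t => fderiv ℝ φ (c t) (v t) with hg₁
  have hφd : Differentiable ℝ φ := hφ.differentiable (by norm_num)
  have hc0 : c 0 = x₀ := by
    simp [hc, hf, Real.sqrt_sq hr0.le, hx₀def]
  have hp0 : p 0 = 0 := by simp [hp]
  have hv0 : v 0 = ei := by simp [hv, hp0]
  -- derivative of f on Ioo (-r) r
  have hst : ∀ t ∈ Set.Ioo (-r) r, 0 < r^2 - t^2 := by
    intro t ht; nlinarith [ht.1, ht.2]
  have hfd : ∀ t ∈ Set.Ioo (-r) r, HasDerivAt f (p t) t := by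
    intro t ht
    have h1 : HasDerivAt (fun s : ℝ => r^2 - s^2) (-(2*t)) t := by
      have := ((hasDerivAt_pow 2 t).const_sub (r^2))
      exact this.congr_deriv (by ring)
    have h2 := (Real.hasDerivAt_sqrt (ne_of_gt (hst t ht))).comp t h1
    refine h2.congr_deriv ?_
    have hsq : Real.sqrt (r^2 - t^2) ≠ 0 := ne_of_gt (Real.sqrt_pos.2 (hst t ht))
    rw [hp]
    field_simp
  have hcd : ∀ t ∈ Set.Ioo (-r) r, HasDerivAt c (v t) t := by
    intro t ht
    have h1 := (hfd t ht).smul_const e₁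
    have h2 := (hasDerivAt_id t).smul_const ei
    have := h1.add h2
    refine this.congr_deriv ?_
    rw [hv]; simp
  have hgd : ∀ t ∈ Set.Ioo (-r) r, HasDerivAt g (g₁ t) t := by
    intro t ht
    exact (hφd (c t)).hasFDerivAt.comp_hasDerivAt t (hcd t ht)
  -- norm of c t
  have hcnorm : ∀ t ∈ Set.Ioo (-r) r, ‖c t‖ = r := by
    intro t ht
    have hsq : ‖c t‖^2 = r^2 := by
      rw [hc]
      simp only
      rw [norm_add_sq_real, norm_smul, norm_smul, hne₁, hnei,
        real_inner_smul_left, real_inner_smul_right, hinner]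
      simp only [mul_one, mul_zero]
      have : Real.sqrt (r^2 - t^2) ^ 2 = r^2 - t^2 :=
        Real.sq_sqrt (le_of_lt (hst t ht))
      rw [Real.norm_eq_abs, Real.norm_eq_abs, hf]
      simp only
      rw [sq_abs, sq_abs, this]
      ring
    rw [← Real.sqrt_sq (norm_nonneg (c t)), hsq, Real.sqrt_sq hr0.le]
  -- local max
  have hmax : IsLocalMax g 0 := by
    apply IsMaxOn.isLocalMax (s := Set.Ioo (-r) r)
    · intro t ht
      simp only [mem_setOf_eq]
      have hg0 : g 0 = u x₀ := by rw [hg]; simp only; rw [hc0]; exact htouch.1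
      have hball : c t ∈ Metric.ball (0 : EuclideanSpace ℝ (Fin N)) R := by
        rw [Metric.mem_ball, dist_zero_right, hcnorm t ht]; exact hrR
      by_cases hct : c t = x₀
      · have : g t = u x₀ := by simp only [hg]; rw [hct]; exact htouch.1
        rw [this, hg0]
      · have h1 : φ (c t) < u (c t) := htouch.2 (c t) hball hct
        have h2 : u (c t) = u x₀ := hrad _ _ (by rw [hcnorm t ht, hx₀norm])
        simp only [hg, hg0]; linarith
    · exact Ioo_mem_nhds (by linarith) hr0
  -- first derivative zero
  have h0mem : (0:ℝ) ∈ Set.Ioo (-r) r := ⟨by linarith, hr0⟩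
  have hg₁0 : g₁ 0 = 0 := hmax.hasDerivAt_eq_zero (hgd 0 h0mem)
  have hpd : pd N φ i x₀ = 0 := by
    have : g₁ 0 = pd N φ i x₀ := by
      rw [hg₁]; simp only; rw [hc0, hv0, pd]
    rw [← this, hg₁0]
  refine ⟨hpd, ?_⟩
  -- second derivative
  have hφ' : ContDiff ℝ 1 (fderiv ℝ φ) := hφ.fderiv_right (by norm_num)
  set B := fderiv ℝ (fderiv ℝ φ) x₀ with hB
  have hA : HasDerivAt (fun t => fderiv ℝ φ (c t)) (B ei) 0 := by
    have h1 : HasFDerivAt (fderiv ℝ φ) B (c 0) := by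
      rw [hc0]; exact (hφ'.differentiable (by norm_num) x₀).hasFDerivAt
    have := h1.comp_hasDerivAt 0 (hcd 0 h0mem)
    rwa [hv0] at this
  have hpd' : HasDerivAt p (-(1/r)) 0 := by
    have h1 : HasDerivAt (fun t : ℝ => -t) (-1) 0 := (hasDerivAt_id 0).neg
    have h2 : HasDerivAt (fun t : ℝ => Real.sqrt (r^2 - t^2)) (p 0) 0 := hfd 0 h0mem
    have h3 : Real.sqrt (r^2 - 0^2) ≠ 0 := by
      have := hst 0 h0mem; positivity
    have := h1.div h2 h3
    refine this.congr_deriv ?_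
    rw [hp0]
    have : Real.sqrt (r^2 - 0^2) = r := by simp [Real.sqrt_sq hr0.le]
    rw [this]
    field_simp
    ring
  have hvd : HasDerivAt v ((-(1/r)) • e₁) 0 := (hpd'.smul_const e₁).add_const ei
  have hmd : HasDerivAt g₁ ((B ei) ei + (fderiv ℝ φ x₀) ((-(1/r)) • e₁)) 0 := by
    have := hA.clm_apply hvd
    rwa [hv0, hc0] at this
  have hm := second_deriv_test_max hr0 hgd hmax hg₁0 hmd
  -- identify B ei ei with pd2
  have hpd2 : pd2 N φ i i x₀ = (B ei) ei := by
    rw [pd2]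
    have hdiff : DifferentiableAt ℝ (fderiv ℝ φ) x₀ := hφ'.differentiable (by norm_num) x₀
    rw [fderiv_clm_apply hdiff (differentiableAt_const ei)]
    simp [hB, hei]
  rw [hpd2]
  have hlin : (fderiv ℝ φ x₀) ((-(1/r)) • e₁) = -(1/r) * pd N φ i0 x₀ := by
    rw [_root_.map_smul, pd]; simp [he₁]
  rw [hlin] at hm
  linarith
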